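/- arXiv:math/0505432 — 2 statements merged into one kernel-verified Lean document; each statement's English description precedes it below -/
import Mathlib

section
/- Let N be a free abelian group with basis y₁, …, y_d, let c₁ | c₂ | ⋯ | c_d be nonnegative integers (with the convention that every integer divides 0), and let N' ⊆ N be the subgroup generated by {c_i y_i : c_i ≠ 0}, so that N/N' ≅ ℤ/c₁ℤ ⊕ ⋯ ⊕ ℤ/c_dℤ. Then Λ²N/(N ∧ N') ≅ ⊕_{1 ≤ i < j ≤ d} ℤ/c_iℤ (where ℤ/0ℤ = ℤ). In particular, if all c_i are nonzero (i.e. N' has finite index in N), then Λ²N/(N ∧ N') is a finite group. -/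
open ExteriorAlgebra

section Aux
variable {d : ℕ} {N : Type*} [AddCommGroup N] [Module ℤ N]

abbrev Pr6 (d : ℕ) := {p : Fin d × Fin d // p.1 < p.2}

abbrev Tgt6 {d : ℕ} (c : Fin d → ℕ) : Type := (p : Pr6 d) → ZMod (c p.val.1)

noncomputable def B6 (y : Module.Basis (Fin d) ℤ N) (c : Fin d → ℕ) : N →ₗ[ℤ] N →ₗ[ℤ] Tgt6 c :=
  LinearMap.mk₂ ℤ
    (fun m n => fun p : Pr6 d => ((y.repr m p.val.1 * y.repr n p.val.2
        - y.repr m p.val.2 * y.repr n p.val.1 : ℤ) : ZMod (c p.val.1)))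
    (by intro m m' n; funext p; simp only [map_add, Finsupp.add_apply, Pi.add_apply]
        push_cast; ring)
    (by intro r m n; funext p
        simp only [map_smul, Finsupp.smul_apply, Pi.smul_apply, smul_eq_mul, zsmul_eq_mul]
        push_cast; ring)
    (by intro m n n'; funext p; simp only [map_add, Finsupp.add_apply, Pi.add_apply]
        push_cast; ring)
    (by intro r m n; funext p
        simp only [map_smul, Finsupp.smul_apply, Pi.smul_apply, smul_eq_mul, zsmul_eq_mul]
        push_cast; ring)

@[simp] lemma B6_apply (y : Module.Basis (Fin d) ℤ N) (c : Fin d → ℕ) (m n : N) (p : Pr6 d) :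
    B6 y c m n p = ((y.repr m p.val.1 * y.repr n p.val.2
        - y.repr m p.val.2 * y.repr n p.val.1 : ℤ) : ZMod (c p.val.1)) := rfl

noncomputable def F6 (y : Module.Basis (Fin d) ℤ N) (c : Fin d → ℕ) : N [⋀^Fin 2]→ₗ[ℤ] Tgt6 c where
  toFun v := B6 y c (v 0) (v 1)
  map_update_add' := by
    intro _ v i a b
    fin_cases i <;>
      simp [Function.update, Fin.ext_iff]
  map_update_smul' := by
    intro _ v i r a
    fin_cases i <;>
      simp [Function.update, Fin.ext_iff]
  map_eq_zero_of_eq' := by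
    intro v i j hv hij
    have h01 : v 0 = v 1 := by
      fin_cases i <;> fin_cases j <;> simp_all
    show B6 y c (v 0) (v 1) = 0
    rw [h01]
    funext p
    simp [mul_comm]

end Aux

section Aux2
variable {d : ℕ} {N : Type*} [AddCommGroup N] [Module ℤ N]

noncomputable def Fam6 (y : Module.Basis (Fin d) ℤ N) (c : Fin d → ℕ) :
    ∀ i : ℕ, N [⋀^Fin i]→ₗ[ℤ] Tgt6 c
  | 2 => F6 y c
  | _ => 0

noncomputable def Phi6 (y : Module.Basis (Fin d) ℤ N) (c : Fin d → ℕ) :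
    ExteriorAlgebra ℤ N →ₗ[ℤ] Tgt6 c :=
  liftAlternating (Fam6 y c)

lemma Phi6_mul (y : Module.Basis (Fin d) ℤ N) (c : Fin d → ℕ) (m n : N) :
    Phi6 y c (ι ℤ m * ι ℤ n) = B6 y c m n := by
  rw [Phi6]; erw [liftAlternating_ι_mul, liftAlternating_ι]
  show (Fam6 y c 2).curryLeft m ![n] = _
  simp [Fam6, F6, AlternatingMap.curryLeft]

noncomputable def Wedge6 (y : Module.Basis (Fin d) ℤ N) (p : Pr6 d) : ExteriorAlgebra ℤ N :=
  ι ℤ (y p.val.1) * ι ℤ (y p.val.2)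

lemma Phi6_wedge (y : Module.Basis (Fin d) ℤ N) (c : Fin d → ℕ) (p q : Pr6 d) :
    Phi6 y c (Wedge6 y p) q = if q = p then 1 else 0 := by
  rw [Wedge6, Phi6_mul, B6_apply]
  simp only [Module.Basis.repr_self, Finsupp.single_apply]
  rcases eq_or_ne q p with rfl | hqp
  · simp [ne_of_gt q.prop]
  · have h1 : ¬ (p.val.1 = q.val.1 ∧ p.val.2 = q.val.2) := by
      intro ⟨h, h'⟩; exact hqp (Subtype.ext (Prod.ext h.symm h'.symm))
    have h2 : ¬ (p.val.2 = q.val.1 ∧ p.val.1 = q.val.2) := by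
      intro ⟨h, h'⟩
      have := p.prop; have := q.prop
      rw [← h, ← h'] at *
      omega
    rw [if_neg hqp]
    by_cases ha : p.val.1 = q.val.1 <;> by_cases hb : p.val.2 = q.val.2 <;>
      by_cases hc : p.val.2 = q.val.1 <;> by_cases hd : p.val.1 = q.val.2 <;>
      simp_all
end Aux2

section Aux3
variable {d : ℕ} {N : Type*} [AddCommGroup N] [Module ℤ N]

lemma wedge6_mem (y : Module.Basis (Fin d) ℤ N) (p : Pr6 d) : Wedge6 y p ∈ ⋀[ℤ]^2 N := by
  show _ ∈ LinearMap.range (ι ℤ (M := N)) ^ 2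
  rw [pow_two]
  exact Submodule.mul_mem_mul (LinearMap.mem_range_self _ _) (LinearMap.mem_range_self _ _)

lemma ιι_mem_span (y : Module.Basis (Fin d) ℤ N) (i j : Fin d) :
    ι ℤ (y i) * ι ℤ (y j) ∈ Submodule.span ℤ (Set.range (Wedge6 y)) := by
  rcases lt_trichotomy i j with h | rfl | h
  · exact Submodule.subset_span ⟨⟨(i, j), h⟩, rfl⟩
  · rw [ι_sq_zero]; exact zero_mem _
  · have : ι ℤ (y i) * ι ℤ (y j) = -(ι ℤ (y j) * ι ℤ (y i)) :=
      eq_neg_of_add_eq_zero_left (ι_add_mul_swap _ _)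
    rw [this]
    exact neg_mem (Submodule.subset_span ⟨⟨(j, i), h⟩, rfl⟩)

lemma pow_le_span (y : Module.Basis (Fin d) ℤ N) :
    (⋀[ℤ]^2 N : Submodule ℤ (ExteriorAlgebra ℤ N)) ≤
      Submodule.span ℤ (Set.range (Wedge6 y)) := by
  intro z hz
  have hz' : z ∈ LinearMap.range (ι ℤ (M := N)) * LinearMap.range (ι ℤ (M := N)) := by
    rwa [← pow_two]
  refine Submodule.mul_induction_on hz' ?_ (fun a b ha hb => add_mem ha hb)
  rintro _ ⟨m, rfl⟩ _ ⟨n, rfl⟩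
  have expand : ∀ u : N, ι ℤ u = ∑ i, y.repr u i • ι ℤ (y i) := by
    intro u
    conv_lhs => rw [← y.sum_repr u]
    rw [map_sum]
    simp [Algebra.smul_def]
  rw [expand m, expand n, Finset.sum_mul_sum]
  refine Submodule.sum_mem _ fun i _ => Submodule.sum_mem _ fun j _ => ?_
  rw [smul_mul_smul_comm]
  exact Submodule.smul_mem _ _ (ιι_mem_span y i j)

lemma Phi6_sum (y : Module.Basis (Fin d) ℤ N) (c : Fin d → ℕ) (v : Pr6 d → ℤ) (q : Pr6 d) :
    Phi6 y c (∑ p, v p • Wedge6 y p) q = ((v q : ℤ) : ZMod (c q.val.1)) := by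
  rw [map_sum]
  rw [Finset.sum_apply]
  have : ∀ p : Pr6 d, (Phi6 y c (v p • Wedge6 y p)) q
      = if q = p then ((v p : ℤ) : ZMod (c q.val.1)) else 0 := by
    intro p
    rw [map_smul, Pi.smul_apply, Phi6_wedge]
    split_ifs
    · rw [zsmul_eq_mul, mul_one]
    · exact smul_zero _
  rw [Finset.sum_congr rfl fun p _ => this p, Finset.sum_ite_eq]
  simp
end Aux3


theorem stmt6 (d : ℕ) (N : Type*) [AddCommGroup N] [Module ℤ N]
    (y : Module.Basis (Fin d) ℤ N) (c : Fin d → ℕ)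
    (hdvd : ∀ i j : Fin d, i ≤ j → c i ∣ c j) :
    -- `N'` is the subgroup generated by the `c i • y i` with `c i ≠ 0`
    letI N' : Submodule ℤ N :=
      Submodule.span ℤ {x : N | ∃ i : Fin d, c i ≠ 0 ∧ x = (c i : ℤ) • y i}
    -- `N ∧ N'`, viewed as a subgroup of `Λ² N`
    letI W : Submodule ℤ ↥(⋀[ℤ]^2 N) :=
      (Submodule.span ℤ {z : ExteriorAlgebra ℤ N |
        ∃ n n' : N, n' ∈ N' ∧ z = ι ℤ n * ι ℤ n'}).comap (⋀[ℤ]^2 N).subtype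
    -- `Λ²N/(N ∧ N') ≅ ⊕_{i<j} ℤ/c_iℤ`, and it is finite if all `c i` are nonzero
    Nonempty ((↥(⋀[ℤ]^2 N) ⧸ W) ≃+
        ((p : {p : Fin d × Fin d // p.1 < p.2}) → ZMod (c p.val.1))) ∧
      ((∀ i, c i ≠ 0) → Finite (↥(⋀[ℤ]^2 N) ⧸ W)) := by
  classical
  set N' : Submodule ℤ N :=
    Submodule.span ℤ {x : N | ∃ i : Fin d, c i ≠ 0 ∧ x = (c i : ℤ) • y i} with hN'
  set S : Set (ExteriorAlgebra ℤ N) :=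
    {z : ExteriorAlgebra ℤ N | ∃ n n' : N, n' ∈ N' ∧ z = ι ℤ n * ι ℤ n'} with hS
  set W : Submodule ℤ ↥(⋀[ℤ]^2 N) :=
    (Submodule.span ℤ S).comap (⋀[ℤ]^2 N).subtype with hW
  set φres : ↥(⋀[ℤ]^2 N) →ₗ[ℤ] Tgt6 c :=
    (Phi6 y c).comp (Submodule.subtype _) with hφres
  -- the span of S is killed by Phi6
  have hSker : Submodule.span ℤ S ≤ LinearMap.ker (Phi6 y c) := by
    rw [Submodule.span_le]
    rintro _ ⟨n, n', hn', rfl⟩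
    simp only [SetLike.mem_coe, LinearMap.mem_ker]
    rw [Phi6_mul]
    have hgen : Submodule.span ℤ {x : N | ∃ i : Fin d, c i ≠ 0 ∧ x = (c i : ℤ) • y i} ≤
        LinearMap.ker (B6 y c n) := by
      rw [Submodule.span_le]
      rintro _ ⟨i, hci, rfl⟩
      simp only [SetLike.mem_coe, LinearMap.mem_ker]
      funext q
      rw [B6_apply, Pi.zero_apply]
      have hrep : ∀ a, y.repr ((c i : ℤ) • y i) a = (c i : ℤ) * (if i = a then 1 else 0) := by
        intro a
        simp [Finsupp.single_apply]
      rw [hrep, hrep, ZMod.intCast_zmod_eq_zero_iff_dvd]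
      by_cases h1 : i = q.val.1
      · have h2 : i ≠ q.val.2 := by
          intro h
          have hq := q.prop
          rw [← h1, ← h] at hq
          exact lt_irrefl _ hq
        rw [if_pos h1, if_neg h2, h1]
        exact ⟨-(y.repr n q.val.2), by ring⟩
      · by_cases h2 : i = q.val.2
        · rw [if_pos h2, if_neg h1, h2]
          obtain ⟨t, ht⟩ := hdvd q.val.1 q.val.2 (le_of_lt q.prop)
          have ht' : (c q.val.2 : ℤ) = (c q.val.1 : ℤ) * (t : ℤ) := by exact_mod_cast ht
          exact ⟨y.repr n q.val.1 * (t : ℤ), by rw [ht']; ring⟩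
        · rw [if_neg h1, if_neg h2]
          exact ⟨0, by ring⟩
    exact hgen hn'
  -- surjectivity
  have hsurj : Function.Surjective φres := by
    intro t
    choose v hv using fun p => ZMod.intCast_surjective (n := c p.val.1) (t p)
    refine ⟨⟨∑ p, v p • Wedge6 y p,
      Submodule.sum_mem _ fun p _ => Submodule.smul_mem _ _ (wedge6_mem y p)⟩, ?_⟩
    funext q
    exact (Phi6_sum y c v q).trans (hv q)
  -- kernel computation
  have hker : LinearMap.ker φres = W := by
    ext x
    simp only [LinearMap.mem_ker, hφres, hW, LinearMap.comp_apply, Submodule.subtype_apply,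
      Submodule.mem_comap]
    constructor
    · intro hx
      obtain ⟨v, hv⟩ := (Submodule.mem_span_range_iff_exists_fun ℤ).1 (pow_le_span y x.2)
      have hdv : ∀ p : Pr6 d, (c p.val.1 : ℤ) ∣ v p := by
        intro p
        have : Phi6 y c (∑ p, v p • Wedge6 y p) p = 0 := by
          rw [hv]
          exact congrFun hx p
        rw [Phi6_sum] at this
        exact (ZMod.intCast_zmod_eq_zero_iff_dvd _ _).1 this
      show (x : ExteriorAlgebra ℤ N) ∈ Submodule.span ℤ S
      rw [← hv]
      refine Submodule.sum_mem _ fun p _ => ?_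
      rcases eq_or_ne (c p.val.1) 0 with hc | hc
      · have hv0 : v p = 0 := by simpa [hc] using hdv p
        rw [hv0, zero_smul]; exact zero_mem _
      · obtain ⟨k, hk⟩ := hdv p
        have hmem : ((c p.val.1 : ℤ) • y p.val.1) ∈ N' :=
          Submodule.subset_span ⟨p.val.1, hc, rfl⟩
        have hneg : ι ℤ (y p.val.2) * ι ℤ ((c p.val.1 : ℤ) • y p.val.1)
            = -((c p.val.1 : ℤ) • Wedge6 y p) := by
          have hsm : ι ℤ ((c p.val.1 : ℤ) • y p.val.1)
              = (c p.val.1 : ℤ) • ι ℤ (y p.val.1) := by simp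
          rw [hsm, mul_smul_comm, Wedge6,
            show ι ℤ (y p.val.2) * ι ℤ (y p.val.1)
              = -(ι ℤ (y p.val.1) * ι ℤ (y p.val.2)) from
              eq_neg_of_add_eq_zero_left (by rw [add_comm]; exact ι_add_mul_swap _ _),
            smul_neg]
        have hin : ι ℤ (y p.val.2) * ι ℤ ((c p.val.1 : ℤ) • y p.val.1)
            ∈ Submodule.span ℤ S := Submodule.subset_span ⟨_, _, hmem, rfl⟩
        rw [hneg, neg_mem_iff] at hin
        rw [hk, mul_comm, ← smul_smul]
        exact Submodule.smul_mem _ _ hin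
    · intro hx
      exact LinearMap.mem_ker.1 (hSker hx)
  have e : (↥(⋀[ℤ]^2 N) ⧸ W) ≃ₗ[ℤ] Tgt6 c :=
    (Submodule.quotEquivOfEq W (LinearMap.ker φres) hker.symm).trans
      (φres.quotKerEquivOfSurjective hsurj)
  refine ⟨⟨e.toAddEquiv⟩, fun h => ?_⟩
  haveI : ∀ p : Pr6 d, NeZero (c p.val.1) := fun p => ⟨h p.val.1⟩
  exact Finite.of_equiv _ e.symm.toEquiv
end

section
/- Let N be a free abelian group of rank d ≥ 2 and let N'' ⊆ N be a subgroup that contains a subgroup S which is a direct summand of N of rank d − 2. Then the quotient group Λ²N/(N ∧ N'') is cyclic. -/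
open ExteriorAlgebra

private lemma finrank_int_congr {M : Type*} [AddCommGroup M] (i1 i2 : Module ℤ M) :
    @Module.finrank ℤ M _ _ i1 = @Module.finrank ℤ M _ _ i2 := by
  have h := @Subsingleton.elim (Module ℤ M)
    (@Unique.instSubsingleton _ AddCommGroup.uniqueIntModule) i1 i2
  rw [h]

private lemma exists_basis_two {R N : Type*} [CommRing R] [IsDomain R]
    [IsPrincipalIdealRing R] [AddCommGroup N] [Module R N] [Module.Free R N]
    [Module.Finite R N] {d : ℕ} (hd : 2 ≤ d) (hrank : Module.finrank R N = d)
    (S T : Submodule R N) (hST : IsCompl S T)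
    (hSrank : Module.finrank R ↥S = d - 2) :
    ∃ t₁ t₂ : N, t₁ ∈ T ∧ t₂ ∈ T ∧ ∀ t ∈ T, ∃ r₁ r₂ : R, t = r₁ • t₁ + r₂ • t₂ := by
  haveI : IsNoetherian R N := isNoetherian_of_isNoetherianRing_of_finite R N
  haveI hfinS : Module.Finite R ↥S := Module.Finite.iff_fg.2 (IsNoetherian.noetherian S)
  haveI hfinT : Module.Finite R ↥T := Module.Finite.iff_fg.2 (IsNoetherian.noetherian T)
  have hfr : Module.finrank R ↥S + Module.finrank R ↥T = d := by
    have h := (Submodule.prodEquivOfIsCompl S T hST).finrank_eq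
    rw [Module.finrank_prod, hrank] at h
    omega
  have hT2 : Module.finrank R ↥T = 2 := by omega
  let b : Module.Basis (Fin 2) R ↥T := Module.finBasisOfFinrankEq R ↥T hT2
  refine ⟨b 0, b 1, (b 0).2, (b 1).2, fun t ht => ?_⟩
  refine ⟨b.repr ⟨t, ht⟩ 0, b.repr ⟨t, ht⟩ 1, ?_⟩
  have h1 : (⟨t, ht⟩ : T) = b.repr ⟨t, ht⟩ 0 • b 0 + b.repr ⟨t, ht⟩ 1 • b 1 := by
    conv_lhs => rw [← b.sum_repr ⟨t, ht⟩]
    rw [Fin.sum_univ_two]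
  have := congrArg Subtype.val h1
  simpa using this

private lemma aux_swap {R M : Type*} [CommRing R] [AddCommGroup M] [Module R M]
    (x y : M) : ι R x * ι R y = -(ι R y * ι R x) :=
  eq_neg_of_add_eq_zero_right (ι_add_mul_swap y x)

private lemma aux_det {R M : Type*} [CommRing R] [AddCommGroup M] [Module R M]
    (r₁ r₂ r₃ r₄ : R) (x y : M) :
    ι R (r₁ • x + r₂ • y) * ι R (r₃ • x + r₄ • y) =
      (r₁ * r₄ - r₂ * r₃) • (ι R x * ι R y) := by
  simp only [map_add, map_smul, add_mul, mul_add, smul_mul_assoc, mul_smul_comm,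
    ι_sq_zero, smul_zero, smul_smul]
  rw [aux_swap y x, sub_smul]
  module

theorem stmt7 (d : ℕ) (hd : 2 ≤ d) (N : Type*) [AddCommGroup N] [Module ℤ N]
    [Module.Free ℤ N] [Module.Finite ℤ N] (hrank : Module.finrank ℤ N = d)
    (N'' : Submodule ℤ N) (S T : Submodule ℤ N)
    (hSN : S ≤ N'') (hST : IsCompl S T) (hSrank : Module.finrank ℤ ↥S = d - 2) :
    -- `Λ²N/(N ∧ N'')` is a cyclic group
    IsAddCyclic (↥(⋀[ℤ]^2 N) ⧸
      ((Submodule.span ℤ {z : ExteriorAlgebra ℤ N |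
        ∃ n n' : N, n' ∈ N'' ∧ z = ι ℤ n * ι ℤ n'}).comap (⋀[ℤ]^2 N).subtype)) := by
  classical
  have hSrank' : @Module.finrank ℤ ↥S _ _ S.module = d - 2 :=
    (finrank_int_congr _ _).trans hSrank
  obtain ⟨t₁, t₂, ht₁T, ht₂T, hbasis⟩ := exists_basis_two hd hrank S T hST hSrank'
  set G : Set (ExteriorAlgebra ℤ N) :=
    {z : ExteriorAlgebra ℤ N | ∃ n n' : N, n' ∈ N'' ∧ z = ι ℤ n * ι ℤ n'} with hG
  set ω : ExteriorAlgebra ℤ N := ι ℤ t₁ * ι ℤ t₂ with hω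
  have hmem : ∀ (n m : N), m ∈ N'' →
      ι ℤ n * ι ℤ m ∈ Submodule.span ℤ (insert ω G) :=
    fun n m hm => Submodule.subset_span (Set.mem_insert_iff.2 (Or.inr ⟨n, m, hm, rfl⟩))
  have hTT : ∀ t ∈ T, ∀ t' ∈ T, ι ℤ t * ι ℤ t' ∈ Submodule.span ℤ (insert ω G) := by
    intro t ht t' ht'
    obtain ⟨r₁, r₂, e1⟩ := hbasis t ht
    obtain ⟨r₃, r₄, e2⟩ := hbasis t' ht'
    rw [e1, e2, aux_det]
    exact Submodule.smul_mem _ _ (Submodule.subset_span (Set.mem_insert _ _))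
  -- key inclusion
  have key : (⋀[ℤ]^2 N : Submodule ℤ (ExteriorAlgebra ℤ N)) ≤
      Submodule.span ℤ (insert ω G) := by
    show LinearMap.range (ι ℤ : N →ₗ[ℤ] _) ^ 2 ≤ _
    rw [pow_two]
    refine Submodule.mul_le.2 ?_
    rintro _ ⟨a, rfl⟩ _ ⟨c, rfl⟩
    obtain ⟨s, hs, t, ht, ha⟩ :=
      Submodule.mem_sup.1 (by rw [hST.sup_eq_top]; trivial : a ∈ S ⊔ T)
    obtain ⟨s', hs', t', ht', hc⟩ :=
      Submodule.mem_sup.1 (by rw [hST.sup_eq_top]; trivial : c ∈ S ⊔ T)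
    have expand : ι ℤ a * ι ℤ c =
        ι ℤ a * ι ℤ s' + (-(ι ℤ t' * ι ℤ s) + ι ℤ t * ι ℤ t') := by
      rw [← ha, ← hc]
      simp only [map_add, add_mul, mul_add]
      rw [← aux_swap s t']
    rw [expand]
    exact add_mem (hmem a s' (hSN hs'))
      (add_mem (neg_mem (hmem t' s (hSN hs))) (hTT t ht t' ht'))
  -- the generator
  have ωmem : ω ∈ (⋀[ℤ]^2 N : Submodule ℤ (ExteriorAlgebra ℤ N)) := by
    show ω ∈ LinearMap.range (ι ℤ : N →ₗ[ℤ] _) ^ 2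
    rw [pow_two]
    exact Submodule.mul_mem_mul (LinearMap.mem_range_self _ t₁) (LinearMap.mem_range_self _ t₂)
  set P : Submodule ℤ ↥(⋀[ℤ]^2 N) :=
    (Submodule.span ℤ G).comap (⋀[ℤ]^2 N).subtype with hP
  refine ⟨⟨Submodule.Quotient.mk (⟨ω, ωmem⟩ : ↥(⋀[ℤ]^2 N)), fun q => ?_⟩⟩
  obtain ⟨x, rfl⟩ := Submodule.Quotient.mk_surjective P q
  have hx : (x : ExteriorAlgebra ℤ N) ∈ Submodule.span ℤ (insert ω G) := key x.2
  rw [Submodule.span_insert, Submodule.mem_sup] at hx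
  obtain ⟨y, hy, z, hz, hyz⟩ := hx
  obtain ⟨k, rfl⟩ := Submodule.mem_span_singleton.1 hy
  have hmemP : x - k • (⟨ω, ωmem⟩ : ↥(⋀[ℤ]^2 N)) ∈ P := by
    show ((x - k • (⟨ω, ωmem⟩ : ↥(⋀[ℤ]^2 N)) : ↥(⋀[ℤ]^2 N)) : ExteriorAlgebra ℤ N)
      ∈ Submodule.span ℤ G
    have : ((x - k • (⟨ω, ωmem⟩ : ↥(⋀[ℤ]^2 N)) : ↥(⋀[ℤ]^2 N)) : ExteriorAlgebra ℤ N) = z := by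
      push_cast
      rw [← hyz]
      abel
    rw [this]
    exact hz
  refine AddSubgroup.mem_zmultiples_iff.2 ⟨k, ?_⟩
  rw [← Int.cast_smul_eq_zsmul ℤ, Int.cast_id, ← Submodule.Quotient.mk_smul]
  exact ((Submodule.Quotient.eq P).2 (by simpa using hmemP)).symm
end
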